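/- Let $x_1 < \dots < x_n$ with $x_1 \geq 0$, probabilities $q_k \in (0,1)$ summing to 1, $\lambda > 0$. Define $H: (x_n - \lambda, \infty) \to \mathbb{R}$ by $H(x) = \lambda \sum_{k=1}^n \frac{q_k x_k}{\lambda + x - x_k} - x$. Then $H$ is strictly decreasing, $H(x) > 0$ for $x$ slightly above $x_n - \lambda$ (i.e., $H(x) \to +\infty$ as $x \to (x_n - \lambda)^+$ if $x_n > 0$), and $H(x) \to -\infty$ as $x \to \infty$; consequently $H$ has exactly one zero on $(x_n - \lambda, \infty)$. -/
import Mathlib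


/-- Properties of `H(x) = λ ∑ q_k x_k / (λ + x - x_k) - x`: strictly decreasing,
blows up at the left endpoint, tends to -∞, and has a unique zero. -/
theorem stmt_15 (n : ℕ) (hn : 2 ≤ n) (x q : Fin n → ℝ)
    (hx : StrictMono x) (hx0 : 0 ≤ x ⟨0, by omega⟩)
    (hq : ∀ k, q k ∈ Set.Ioo (0 : ℝ) 1) (hqsum : ∑ k, q k = 1)
    (lam : ℝ) (hlam : 0 < lam)
    (H : ℝ → ℝ)
    (hH : ∀ y, H y = lam * (∑ k, q k * x k / (lam + y - x k)) - y) :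
    StrictAntiOn H (Set.Ioi (x ⟨n - 1, by omega⟩ - lam)) ∧
    Filter.Tendsto H
      (nhdsWithin (x ⟨n - 1, by omega⟩ - lam) (Set.Ioi (x ⟨n - 1, by omega⟩ - lam)))
      Filter.atTop ∧
    Filter.Tendsto H Filter.atTop Filter.atBot ∧
    ∃! y : ℝ, y ∈ Set.Ioi (x ⟨n - 1, by omega⟩ - lam) ∧ H y = 0 := by
  have hn1 : n - 1 < n := by omega
  set m : Fin n := ⟨n - 1, hn1⟩ with hm
  set p : ℝ := x m - lam with hp
  -- basic facts
  have hxle : ∀ k : Fin n, x k ≤ x m := by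
    intro k
    exact hx.monotone (by simp [hm, Fin.le_def]; omega)
  have hxnn : ∀ k : Fin n, 0 ≤ x k := by
    intro k
    exact le_trans hx0 (hx.monotone (by simp [Fin.le_def]))
  have hxmpos : 0 < x m := by
    have : x ⟨0, by omega⟩ < x m := hx (by simp [hm, Fin.lt_def]; omega)
    linarith [hx0]
  have hxlt : ∀ k : Fin n, k ≠ m → x k < x m := by
    intro k hk
    apply hx
    have : (k : ℕ) ≠ n - 1 := fun h => hk (Fin.ext h)
    simp [hm, Fin.lt_def]; omega
  have hden : ∀ y ∈ Set.Ioi p, ∀ k : Fin n, 0 < lam + y - x k := by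
    intro y hy k
    have := hxle k
    have : p < y := hy
    simp [hp] at this
    linarith [hxle k]
  -- strict antitone
  have h1 : StrictAntiOn H (Set.Ioi p) := by
    intro a ha b hb hab
    rw [hH, hH]
    have hsum : ∑ k, q k * x k / (lam + b - x k) ≤ ∑ k, q k * x k / (lam + a - x k) := by
      apply Finset.sum_le_sum
      intro k _
      have hnum : 0 ≤ q k * x k := mul_nonneg (hq k).1.le (hxnn k)
      have hda := hden a ha k
      gcongr <;> linarith
    nlinarith
  -- tendsto atTop at left endpoint
  have key : ∀ y, H y = lam * (q m * x m) * (lam + y - x m)⁻¹ +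
      (lam * (∑ k ∈ Finset.univ.erase m, q k * x k / (lam + y - x k)) - y) := by
    intro y
    rw [hH, ← Finset.sum_erase_add _ _ (Finset.mem_univ m), div_eq_mul_inv]
    ring
  have h2 : Filter.Tendsto H (nhdsWithin p (Set.Ioi p)) Filter.atTop := by
    have hA : Filter.Tendsto (fun y => lam + y - x m) (nhdsWithin p (Set.Ioi p))
        (nhdsWithin 0 (Set.Ioi 0)) := by
      rw [tendsto_nhdsWithin_iff]
      constructor
      · have : Filter.Tendsto (fun y => lam + y - x m) (nhds p) (nhds (lam + p - x m)) :=
          ((continuous_const.add continuous_id).sub continuous_const).tendsto p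
        simp only [hp] at this ⊢
        convert this.mono_left nhdsWithin_le_nhds using 2
        ring
      · filter_upwards [self_mem_nhdsWithin] with y hy
        have := hden y hy m
        simpa using this
    have hinv : Filter.Tendsto (fun y => (lam + y - x m)⁻¹) (nhdsWithin p (Set.Ioi p))
        Filter.atTop := tendsto_inv_nhdsGT_zero.comp hA
    have hc : 0 < lam * (q m * x m) := by
      have := (hq m).1
      positivity
    have hfirst : Filter.Tendsto (fun y => lam * (q m * x m) * (lam + y - x m)⁻¹)
        (nhdsWithin p (Set.Ioi p)) Filter.atTop := hinv.const_mul_atTop hc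
    have hsecond : Filter.Tendsto
        (fun y => lam * (∑ k ∈ Finset.univ.erase m, q k * x k / (lam + y - x k)) - y)
        (nhdsWithin p (Set.Ioi p))
        (nhds (lam * (∑ k ∈ Finset.univ.erase m, q k * x k / (lam + p - x k)) - p)) := by
      apply Filter.Tendsto.mono_left _ nhdsWithin_le_nhds
      apply Filter.Tendsto.sub _ Filter.tendsto_id
      apply Filter.Tendsto.const_mul
      apply tendsto_finset_sum
      intro k hk
      have hkne : k ≠ m := Finset.ne_of_mem_erase hk
      have hdne : lam + p - x k ≠ 0 := by
        have := hxlt k hkne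
        simp [hp]; intro h; nlinarith
      exact Filter.Tendsto.div tendsto_const_nhds
        (((continuous_const.add continuous_id).sub continuous_const).tendsto p) hdne
    exact Filter.Tendsto.congr (fun y => (key y).symm) (hfirst.atTop_add hsecond)
  -- tendsto atBot at atTop
  have h3 : Filter.Tendsto H Filter.atTop Filter.atBot := by
    have hsum : Filter.Tendsto (fun y => lam * (∑ k, q k * x k / (lam + y - x k)))
        Filter.atTop (nhds (lam * 0)) := by
      apply Filter.Tendsto.const_mul
      have : Filter.Tendsto (fun y : ℝ => (0 : ℝ)) Filter.atTop (nhds 0) := tendsto_const_nhds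
      have h0 : (0 : ℝ) = ∑ k : Fin n, (0 : ℝ) := by simp
      rw [h0]
      apply tendsto_finset_sum
      intro k _
      apply Filter.Tendsto.div_atTop tendsto_const_nhds
      have : Filter.Tendsto (fun y : ℝ => y + (lam - x k)) Filter.atTop Filter.atTop :=
        Filter.tendsto_atTop_add_const_right _ _ Filter.tendsto_id
      exact this.congr (fun y => by ring)
    have hneg : Filter.Tendsto (fun y : ℝ => -y) Filter.atTop Filter.atBot :=
      Filter.tendsto_neg_atTop_atBot
    have := hsum.add_atBot hneg
    exact this.congr (fun y => by rw [hH]; ring)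
  -- continuity on Ioi p
  have hcont : ∀ y ∈ Set.Ioi p, ContinuousAt H y := by
    intro y hy
    have hHfun : H = fun y => lam * (∑ k, q k * x k / (lam + y - x k)) - y := funext hH
    rw [hHfun]
    have hs : ContinuousAt (fun y => ∑ k, q k * x k / (lam + y - x k)) y := by
      apply tendsto_finset_sum
      intro k _
      exact ContinuousAt.div continuousAt_const
        (((continuous_const.add continuous_id).sub continuous_const).continuousAt)
        (ne_of_gt (hden y hy k))
    exact ((continuousAt_const.mul hs).sub continuousAt_id)
  -- unique zero
  refine ⟨h1, h2, h3, ?_⟩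
  obtain ⟨a, haH, hap⟩ : ∃ a, 0 < H a ∧ a ∈ Set.Ioi p := by
    have := (h2.eventually_gt_atTop 0).and self_mem_nhdsWithin
    exact this.exists
  obtain ⟨b, hbH, hab⟩ : ∃ b, H b < 0 ∧ a < b := by
    have := (h3.eventually_lt_atBot 0).and (Filter.eventually_gt_atTop a)
    exact this.exists
  have hsub : Set.Icc a b ⊆ Set.Ioi p := fun z hz => lt_of_lt_of_le hap hz.1
  have hcIcc : ContinuousOn H (Set.Icc a b) := fun z hz =>
    (hcont z (hsub hz)).continuousWithinAt
  have h0mem : (0 : ℝ) ∈ Set.Icc (H b) (H a) := ⟨hbH.le, haH.le⟩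
  obtain ⟨c, hc, hc0⟩ := intermediate_value_Icc' hab.le hcIcc h0mem
  refine ⟨c, ⟨hsub hc, hc0⟩, ?_⟩
  intro z hz
  exact h1.injOn hz.1 (hsub hc) (by rw [hz.2, hc0])
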